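/- Let A be a symmetric d×d matrix with A ≻ ℓI, let δ_L > 0 with Φ_ℓ(A) ≤ 1/δ_L, and let v ∈ R^d. Define Φ_ℓ(A) = tr[(A − ℓI)⁻¹]. If 0 < c ≤ vᵀ( (A − (ℓ+δ_L)I)⁻² / (Φ_{ℓ+δ_L}(A) − Φ_ℓ(A)) − (A − (ℓ+δ_L)I)⁻¹ )v, then Φ_{ℓ+δ_L}(A + (1/c)·vvᵀ) ≤ Φ_ℓ(A) and A + (1/c)·vvᵀ ≻ (ℓ+δ_L)I. -/

import Mathlib

open Matrix
open scoped MatrixOrder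

variable {n : Type*} [Fintype n] [DecidableEq n]

lemma bss_star_eq (x : n → ℝ) : star x = x := by simp

lemma bss_trace_pos [Nonempty n] {M : Matrix n n ℝ} (hM : M.PosDef) : 0 < M.trace := by
  rw [Matrix.trace]
  refine Finset.sum_pos (fun i _ => ?_) Finset.univ_nonempty
  exact hM.diag_pos

lemma bss_symm_shift {S : Matrix n n ℝ} (hS : S.IsHermitian) (a b : n → ℝ) :
    a ⬝ᵥ S *ᵥ b = (S *ᵥ a) ⬝ᵥ b := by
  have hSt : Sᵀ = S := by
    rw [← Matrix.conjTranspose_eq_transpose_of_trivial]; exact hS.eq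
  rw [Matrix.dotProduct_mulVec, ← hS.eq, Matrix.vecMul_conjTranspose]
  simp [hSt]

lemma bss_quad_le_trace {M : Matrix n n ℝ} (hM : M.PosSemidef) (x : n → ℝ) :
    x ⬝ᵥ M *ᵥ x ≤ M.trace * (x ⬝ᵥ x) := by
  obtain ⟨B, hB⟩ := CStarAlgebra.nonneg_iff_eq_star_mul_self.mp hM.nonneg
  rw [star_eq_conjTranspose] at hB
  subst hB
  have h1 : x ⬝ᵥ (Bᴴ * B) *ᵥ x = (B *ᵥ x) ⬝ᵥ (B *ᵥ x) := by
    rw [← Matrix.mulVec_mulVec, Matrix.dotProduct_mulVec, Matrix.vecMul_conjTranspose]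
    simp
  rw [h1]
  have h2 : (Bᴴ * B).trace = ∑ i, ∑ j, (B i j) ^ 2 := by
    rw [Matrix.trace]
    rw [Finset.sum_comm]
    simp [Matrix.diag, Matrix.mul_apply, Matrix.conjTranspose_apply, sq]
  rw [h2]
  have h3 : (B *ᵥ x) ⬝ᵥ (B *ᵥ x) = ∑ i, (∑ j, B i j * x j) ^ 2 := by
    simp [dotProduct, Matrix.mulVec, sq]
  rw [h3, Finset.sum_mul]
  refine Finset.sum_le_sum fun i _ => ?_
  have := Finset.sum_mul_sq_le_sq_mul_sq Finset.univ (fun j => B i j) x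
  calc (∑ j, B i j * x j) ^ 2 ≤ (∑ j, B i j ^ 2) * ∑ j, x j ^ 2 := this
    _ = (∑ j, B i j ^ 2) * (x ⬝ᵥ x) := by simp [dotProduct, sq]

lemma bss_conj_posdef {M S : Matrix n n ℝ} (hM : M.PosDef) (hS : S.IsHermitian)
    (hSu : IsUnit S) : (S * M * S).PosDef := by
  have hSt : Sᵀ = S := by
    rw [← Matrix.conjTranspose_eq_transpose_of_trivial]; exact hS.eq
  have hMt : Mᵀ = M := by
    rw [← Matrix.conjTranspose_eq_transpose_of_trivial]; exact hM.1.eq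
  refine .of_dotProduct_mulVec_pos (by simp [Matrix.IsHermitian, Matrix.conjTranspose_mul, hSt, hMt, mul_assoc]) ?_
  intro x hx
  have hSx : S *ᵥ x ≠ 0 := by
    intro h
    exact hx <| (Matrix.mulVec_injective_iff_isUnit.mpr hSu) (by simpa using h)
  have : star x ⬝ᵥ (S * M * S) *ᵥ x = (S *ᵥ x) ⬝ᵥ M *ᵥ (S *ᵥ x) := by
    rw [bss_star_eq, ← Matrix.mulVec_mulVec, ← Matrix.mulVec_mulVec, bss_symm_shift hS]
  rw [this]
  simpa using hM.dotProduct_mulVec_pos hSx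

lemma bss_sqrt_isUnit {M : Matrix n n ℝ} (hM : M.PosDef) : IsUnit (CFC.sqrt M) := by
  rw [Matrix.isUnit_iff_isUnit_det]
  have h : (CFC.sqrt M).det * (CFC.sqrt M).det = M.det := by
    rw [← Matrix.det_mul, CFC.sqrt_mul_sqrt_self M hM.posSemidef.nonneg]
  have : M.det ≠ 0 := hM.det_pos.ne'
  exact (by nlinarith [hM.det_pos, sq_nonneg (CFC.sqrt M).det] : (CFC.sqrt M).det ≠ 0).isUnit

lemma bss_trace_mul_pos [Nonempty n] {M N : Matrix n n ℝ} (hM : M.PosDef) (hN : N.PosDef) :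
    0 < (M * N).trace := by
  have hT := CFC.sqrt_mul_sqrt_self N hN.posSemidef.nonneg
  have h1 : M * N = M * CFC.sqrt N * CFC.sqrt N := by rw [mul_assoc, hT]
  rw [h1, Matrix.trace_mul_comm, ← mul_assoc]
  exact bss_trace_pos (bss_conj_posdef hM (CFC.sqrt_nonneg N).posSemidef.1 (bss_sqrt_isUnit hN))

lemma bss_vvt_psd (v : n → ℝ) : (Matrix.vecMulVec v v).PosSemidef := by
  refine .of_dotProduct_mulVec_nonneg (by ext i j; simp [Matrix.vecMulVec_apply, Matrix.conjTranspose_apply, mul_comm]) ?_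
  intro x
  have : star x ⬝ᵥ (Matrix.vecMulVec v v) *ᵥ x = (v ⬝ᵥ x) ^ 2 := by
    rw [bss_star_eq]
    simp only [dotProduct, Matrix.mulVec, Matrix.vecMulVec_apply, sq,
      Finset.sum_mul, Finset.mul_sum]
    rw [Finset.sum_comm]
    exact Finset.sum_congr rfl fun i _ => Finset.sum_congr rfl fun j _ => by ring
  rw [this]
  positivity

lemma bss_vvt_sandwich (v : n → ℝ) (M : Matrix n n ℝ) :
    Matrix.vecMulVec v v * M * Matrix.vecMulVec v v
      = (v ⬝ᵥ M *ᵥ v) • Matrix.vecMulVec v v := by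
  ext i j
  simp only [Matrix.mul_apply, Matrix.vecMulVec_apply, Matrix.smul_apply, Matrix.mulVec,
    dotProduct, smul_eq_mul, Finset.sum_mul, Finset.mul_sum]
  rw [Finset.sum_comm]
  exact Finset.sum_congr rfl fun k _ => Finset.sum_congr rfl fun l _ => by ring

lemma bss_trace_vvt (v : n → ℝ) (N : Matrix n n ℝ) :
    (Matrix.vecMulVec v v * N).trace = v ⬝ᵥ N *ᵥ v := by
  simp only [Matrix.trace, Matrix.diag, Matrix.mul_apply, Matrix.vecMulVec_apply,
    dotProduct, Matrix.mulVec, Finset.mul_sum]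
  rw [Finset.sum_comm]
  exact Finset.sum_congr rfl fun k _ => Finset.sum_congr rfl fun l _ => by ring

lemma bss_smul_psd {a : ℝ} (ha : 0 ≤ a) {M : Matrix n n ℝ} (hM : M.PosSemidef) :
    (a • M).PosSemidef := by
  refine .of_dotProduct_mulVec_nonneg ?_ fun x => ?_
  · show (a • M)ᴴ = a • M
    rw [Matrix.conjTranspose_smul, star_trivial, hM.1.eq]
  · rw [Matrix.smul_mulVec, dotProduct_smul, smul_eq_mul]
    exact mul_nonneg ha (hM.dotProduct_mulVec_nonneg x)

open Matrix in
theorem bss_lower_barrier (d : ℕ) (A : Matrix (Fin d) (Fin d) ℝ) (hA : A.IsSymm)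
    (ℓ δL : ℝ) (hδL : 0 < δL)
    (hAℓ : (A - ℓ • (1 : Matrix (Fin d) (Fin d) ℝ)).PosDef)
    (hΦ : ((A - ℓ • (1 : Matrix (Fin d) (Fin d) ℝ))⁻¹).trace ≤ 1 / δL)
    (v : Fin d → ℝ) (c : ℝ) (hc : 0 < c)
    (hcle :
      c ≤ v ⬝ᵥ (((A - (ℓ + δL) • (1 : Matrix (Fin d) (Fin d) ℝ)) ^ 2)⁻¹).mulVec v
          / (((A - (ℓ + δL) • (1 : Matrix (Fin d) (Fin d) ℝ))⁻¹).trace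
              - ((A - ℓ • (1 : Matrix (Fin d) (Fin d) ℝ))⁻¹).trace)
        - v ⬝ᵥ ((A - (ℓ + δL) • (1 : Matrix (Fin d) (Fin d) ℝ))⁻¹).mulVec v) :
    (((A + c⁻¹ • vecMulVec v v) - (ℓ + δL) • (1 : Matrix (Fin d) (Fin d) ℝ))⁻¹).trace
        ≤ ((A - ℓ • (1 : Matrix (Fin d) (Fin d) ℝ))⁻¹).trace
    ∧ ((A + c⁻¹ • vecMulVec v v) - (ℓ + δL) • (1 : Matrix (Fin d) (Fin d) ℝ)).PosDef := by
  classical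
  rcases isEmpty_or_nonempty (Fin d) with hd | hd
  · exfalso
    have hv : v = 0 := Subsingleton.elim _ _
    have ht : ∀ M : Matrix (Fin d) (Fin d) ℝ, M.trace = 0 := fun M =>
      Matrix.trace_eq_zero_of_isEmpty M
    rw [hv] at hcle
    simp [ht] at hcle
    linarith
  set C : Matrix (Fin d) (Fin d) ℝ := A - ℓ • 1 with hCdef
  set B : Matrix (Fin d) (Fin d) ℝ := A - (ℓ + δL) • 1 with hBdef
  set V : Matrix (Fin d) (Fin d) ℝ := vecMulVec v v with hVdef
  have hAh : A.IsHermitian := by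
    show Aᴴ = A
    rw [Matrix.conjTranspose_eq_transpose_of_trivial]; exact hA
  have hBh : B.IsHermitian := by
    show Bᴴ = B
    rw [hBdef]
    simp [Matrix.conjTranspose_sub, hAh.eq, hA.eq]
  have hCdet : IsUnit C.det := hAℓ.det_pos.ne'.isUnit
  have hCinv : C⁻¹.PosDef := hAℓ.inv
  have htrC : 0 < C⁻¹.trace := bss_trace_pos hCinv
  -- key quadratic bound : δL * (x ⬝ᵥ x) ≤ x ⬝ᵥ C x
  have key : ∀ x : Fin d → ℝ, δL * (x ⬝ᵥ x) ≤ x ⬝ᵥ C *ᵥ x := by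
    intro x
    rcases eq_or_ne x 0 with rfl | hx
    · simp
    · have hxx : 0 < x ⬝ᵥ x := by
        have := dotProduct_star_self_pos_iff (v := x) |>.mpr hx
        simpa using this
      set T := CFC.sqrt C with hTdef
      have hTsq : T * T = C := CFC.sqrt_mul_sqrt_self C hAℓ.posSemidef.nonneg
      have hTh : T.IsHermitian := (CFC.sqrt_nonneg C).posSemidef.1
      have hTu : IsUnit T := bss_sqrt_isUnit hAℓ
      have hTdet : IsUnit T.det := (Matrix.isUnit_iff_isUnit_det T).mp hTu
      have hThinv : T⁻¹.IsHermitian := hTh.inv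
      have h1 : x ⬝ᵥ x = (T *ᵥ x) ⬝ᵥ (T⁻¹ *ᵥ x) := by
        rw [← bss_symm_shift hTh, Matrix.mulVec_mulVec, Matrix.mul_nonsing_inv _ hTdet,
          Matrix.one_mulVec]
      have hTT : (T *ᵥ x) ⬝ᵥ (T *ᵥ x) = x ⬝ᵥ C *ᵥ x := by
        rw [← bss_symm_shift hTh, Matrix.mulVec_mulVec, hTsq]
      have hTTi : (T⁻¹ *ᵥ x) ⬝ᵥ (T⁻¹ *ᵥ x) = x ⬝ᵥ C⁻¹ *ᵥ x := by
        rw [← bss_symm_shift hThinv, Matrix.mulVec_mulVec, ← Matrix.mul_inv_rev, hTsq]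
      have h2 : (x ⬝ᵥ x) ^ 2 ≤ (x ⬝ᵥ C *ᵥ x) * (x ⬝ᵥ C⁻¹ *ᵥ x) := by
        rw [← hTT, ← hTTi, h1]
        have hcs := Finset.sum_mul_sq_le_sq_mul_sq Finset.univ (T *ᵥ x) (T⁻¹ *ᵥ x)
        calc ((T *ᵥ x) ⬝ᵥ (T⁻¹ *ᵥ x)) ^ 2
            = (∑ i, (T *ᵥ x) i * (T⁻¹ *ᵥ x) i) ^ 2 := rfl
          _ ≤ (∑ i, (T *ᵥ x) i ^ 2) * ∑ i, (T⁻¹ *ᵥ x) i ^ 2 := hcs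
          _ = ((T *ᵥ x) ⬝ᵥ (T *ᵥ x)) * ((T⁻¹ *ᵥ x) ⬝ᵥ (T⁻¹ *ᵥ x)) := by
              simp [dotProduct, sq]
      have h3 : x ⬝ᵥ C⁻¹ *ᵥ x ≤ (1 / δL) * (x ⬝ᵥ x) := by
        calc x ⬝ᵥ C⁻¹ *ᵥ x ≤ C⁻¹.trace * (x ⬝ᵥ x) := bss_quad_le_trace hCinv.posSemidef x
          _ ≤ (1 / δL) * (x ⬝ᵥ x) := mul_le_mul_of_nonneg_right hΦ hxx.le
      have hqC : 0 < x ⬝ᵥ C *ᵥ x := by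
        have := hAℓ.dotProduct_mulVec_pos hx
        simpa using this
      have h4 : (x ⬝ᵥ x) ^ 2 ≤ (x ⬝ᵥ C *ᵥ x) * ((1 / δL) * (x ⬝ᵥ x)) :=
        le_trans h2 (mul_le_mul_of_nonneg_left h3 hqC.le)
      have h6 : δL * ((x ⬝ᵥ C *ᵥ x) * ((1 / δL) * (x ⬝ᵥ x)))
          = (x ⬝ᵥ C *ᵥ x) * (x ⬝ᵥ x) := by
        field_simp
      have h5 : (δL * (x ⬝ᵥ x)) * (x ⬝ᵥ x) ≤ (x ⬝ᵥ C *ᵥ x) * (x ⬝ᵥ x) := by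
        rw [← h6]
        calc (δL * (x ⬝ᵥ x)) * (x ⬝ᵥ x) = δL * (x ⬝ᵥ x) ^ 2 := by ring
          _ ≤ δL * ((x ⬝ᵥ C *ᵥ x) * ((1 / δL) * (x ⬝ᵥ x))) :=
              mul_le_mul_of_nonneg_left h4 hδL.le
      exact le_of_mul_le_mul_right h5 hxx
  have hBpsd : B.PosSemidef := by
    refine .of_dotProduct_mulVec_nonneg hBh fun x => ?_
    have hBC : B = C - δL • 1 := by rw [hBdef, hCdef]; module
    have hq : x ⬝ᵥ B *ᵥ x = x ⬝ᵥ C *ᵥ x - δL * (x ⬝ᵥ x) := by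
      rw [hBC, Matrix.sub_mulVec, dotProduct_sub, Matrix.smul_mulVec,
        Matrix.one_mulVec, dotProduct_smul, smul_eq_mul]
    rw [bss_star_eq, hq]
    have := key x
    linarith
  by_cases hdetB : IsUnit B.det
  swap
  · exfalso
    have hB0 : B⁻¹ = 0 := Matrix.nonsing_inv_apply_not_isUnit _ hdetB
    have hB20 : (B ^ 2)⁻¹ = 0 := by
      refine Matrix.nonsing_inv_apply_not_isUnit _ ?_
      rw [Matrix.det_pow]
      intro h
      exact hdetB ((pow_ne_zero_iff (by norm_num : (2:ℕ) ≠ 0)).mp h.ne_zero).isUnit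
    rw [hB0, hB20] at hcle
    simp only [Matrix.zero_mulVec, dotProduct_zero, Matrix.trace_zero, zero_sub,
      zero_div, sub_zero] at hcle
    linarith
  -- B is positive definite
  have hB : B.PosDef := by
    refine .of_dotProduct_mulVec_pos hBh fun x hx => ?_
    refine lt_of_le_of_ne (hBpsd.dotProduct_mulVec_nonneg x) fun heq => hx ?_
    have hBx : B *ᵥ x = 0 := (hBpsd.dotProduct_mulVec_zero_iff x).mp heq.symm
    have hinj := Matrix.mulVec_injective_iff_isUnit.mpr ((Matrix.isUnit_iff_isUnit_det B).mpr hdetB)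
    exact hinj (by simpa using hBx)
  have hBinv : B⁻¹.PosDef := hB.inv
  -- trace gap is positive
  have hBiCi : B⁻¹ - C⁻¹ = δL • (B⁻¹ * C⁻¹) := by
    have hCB : C - B = δL • 1 := by rw [hBdef, hCdef]; module
    calc B⁻¹ - C⁻¹ = B⁻¹ * (C - B) * C⁻¹ := by
          rw [Matrix.mul_sub, Matrix.sub_mul, mul_assoc, Matrix.mul_nonsing_inv _ hCdet,
            mul_one, Matrix.nonsing_inv_mul _ hdetB, Matrix.one_mul]
      _ = δL • (B⁻¹ * C⁻¹) := by
          rw [hCB, Matrix.mul_smul, mul_one, Matrix.smul_mul]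
  have hΔ : 0 < B⁻¹.trace - C⁻¹.trace := by
    rw [← Matrix.trace_sub, hBiCi, Matrix.trace_smul, smul_eq_mul]
    exact mul_pos hδL (bss_trace_mul_pos hBinv hCinv)
  set q : ℝ := v ⬝ᵥ B⁻¹ *ᵥ v with hqdef
  have hq0 : 0 ≤ q := by
    have := hBinv.posSemidef.dotProduct_mulVec_nonneg v
    simpa using this
  have hcq : 0 < c + q := by linarith
  -- Sherman–Morrison
  have hsand : V * B⁻¹ * V = q • V := bss_vvt_sandwich v B⁻¹
  have hSM : (B + c⁻¹ • V)⁻¹ = B⁻¹ - (c + q)⁻¹ • (B⁻¹ * V * B⁻¹) := by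
    refine Matrix.inv_eq_right_inv ?_
    have e1 : B * (B⁻¹ * V * B⁻¹) = V * B⁻¹ := by
      rw [mul_assoc B⁻¹, Matrix.mul_nonsing_inv_cancel_left _ _ hdetB]
    have e2 : V * (B⁻¹ * V * B⁻¹) = q • (V * B⁻¹) := by
      rw [show V * (B⁻¹ * V * B⁻¹) = (V * B⁻¹ * V) * B⁻¹ by noncomm_ring, hsand,
        Matrix.smul_mul]
    have expand : (B + c⁻¹ • V) * (B⁻¹ - (c + q)⁻¹ • (B⁻¹ * V * B⁻¹))
        = 1 + (c⁻¹ - (c + q)⁻¹ - c⁻¹ * ((c + q)⁻¹ * q)) • (V * B⁻¹) := by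
      rw [Matrix.add_mul, Matrix.mul_sub, Matrix.mul_sub, Matrix.mul_nonsing_inv _ hdetB,
        Matrix.mul_smul, e1, Matrix.smul_mul, Matrix.mul_smul, Matrix.smul_mul, e2]
      simp only [smul_smul]
      module
    rw [expand]
    have hz : c⁻¹ - (c + q)⁻¹ - c⁻¹ * ((c + q)⁻¹ * q) = 0 := by
      field_simp
      ring
    rw [hz, zero_smul, add_zero]
  set r : ℝ := v ⬝ᵥ (B⁻¹ * B⁻¹) *ᵥ v with hrdef
  have htrSM : (B + c⁻¹ • V)⁻¹.trace = B⁻¹.trace - (c + q)⁻¹ * r := by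
    rw [hSM, Matrix.trace_sub, Matrix.trace_smul, smul_eq_mul]
    have : (B⁻¹ * V * B⁻¹).trace = r := by
      rw [Matrix.trace_mul_comm, ← mul_assoc, Matrix.trace_mul_comm, bss_trace_vvt]
    rw [this]
  have hr2 : v ⬝ᵥ ((B ^ 2)⁻¹) *ᵥ v = r := by
    rw [sq, Matrix.mul_inv_rev]
  rw [hr2] at hcle
  have hgoalM : A + c⁻¹ • V - (ℓ + δL) • (1 : Matrix (Fin d) (Fin d) ℝ) = B + c⁻¹ • V := by
    rw [hBdef]; module
  rw [hgoalM]
  have har : (c + q) * (B⁻¹.trace - C⁻¹.trace) ≤ r := by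
    have h1 : c + q ≤ r / (B⁻¹.trace - C⁻¹.trace) := by linarith
    calc (c + q) * (B⁻¹.trace - C⁻¹.trace)
        ≤ r / (B⁻¹.trace - C⁻¹.trace) * (B⁻¹.trace - C⁻¹.trace) :=
          mul_le_mul_of_nonneg_right h1 hΔ.le
      _ = r := div_mul_cancel₀ _ hΔ.ne'
  have hfin : B⁻¹.trace - (c + q)⁻¹ * r ≤ C⁻¹.trace := by
    have hle : B⁻¹.trace - C⁻¹.trace ≤ (c + q)⁻¹ * r := by
      rw [← mul_le_mul_iff_right₀ hcq, ← mul_assoc, mul_inv_cancel₀ hcq.ne', one_mul]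
      exact har
    linarith
  exact ⟨by rw [htrSM]; exact hfin,
    hB.add_posSemidef (bss_smul_psd (inv_nonneg.mpr hc.le) (bss_vvt_psd v))⟩
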